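/- Let n ≥ 1 be a natural number, α ∈ ℝ, and let P ∈ ℝ² satisfy P = c · u(α) for some real c. For each integer j define C_j = P − ⟪P, u(α + jπ/n)⟫ · u(α + jπ/n) (the foot of the perpendicular from the origin to the line through P in direction u(α + jπ/n), i.e. the midpoint of the corresponding chord). Then for every k with 1 ≤ k ≤ n, (C_k − P) + (C_{n−k} − P) = −2·cos²(kπ/n) · P. -/

import Mathlib

open RealInnerProductSpace Real

/-- The unit vector in direction `φ`. -/
noncomputable def u (φ : ℝ) : EuclideanSpace ℝ (Fin 2) :=
  !₂[Real.cos φ, Real.sin φ]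

lemma inner_u (c α θ : ℝ) : ⟪(c • u α : EuclideanSpace ℝ (Fin 2)), u θ⟫ = c * Real.cos (θ - α) := by
  simp only [u, PiLp.toLp_apply, PiLp.inner_apply, Fin.sum_univ_two, PiLp.smul_apply, smul_eq_mul,
    RCLike.inner_apply, conj_trivial, Matrix.cons_val_zero, Matrix.cons_val_one, Matrix.head_cons,
    Real.cos_sub]
  ring

theorem midpoint_pairing
    (n : ℕ) (hn : 1 ≤ n) (α : ℝ) (P : EuclideanSpace ℝ (Fin 2))
    (c : ℝ) (hdiam : P = c • u α)
    (C : ℤ → EuclideanSpace ℝ (Fin 2))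
    (hC : ∀ j : ℤ, C j =
      P - ⟪P, u (α + j * π / n)⟫ • u (α + j * π / n)) :
    ∀ k : ℤ, 1 ≤ k → k ≤ (n : ℤ) →
      (C k - P) + (C ((n : ℤ) - k) - P) =
        (-2 * Real.cos (k * π / n) ^ 2) • P := by
  intro k hk1 hk2
  have hn0 : (n : ℝ) ≠ 0 := by positivity
  have h1 : (((n : ℤ) - k : ℤ) : ℝ) * π / n = π - k * π / n := by
    push_cast
    field_simp
  subst hdiam
  rw [hC, hC, inner_u, inner_u, h1]
  ext i
  fin_cases i
  · simp only [u, PiLp.toLp_apply, PiLp.add_apply, PiLp.sub_apply, PiLp.smul_apply, smul_eq_mul,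
      Matrix.cons_val_zero, Matrix.cons_val_one, Matrix.head_cons,
      Real.cos_add, Real.sin_add, Real.cos_sub, Real.sin_sub,
      Real.cos_pi, Real.sin_pi, Fin.mk_zero, Fin.mk_one]
    linear_combination (-2 * c * Real.cos α * Real.cos ((k : ℝ) * π / n) ^ 2) *
      Real.sin_sq_add_cos_sq α
  · simp only [u, PiLp.toLp_apply, PiLp.add_apply, PiLp.sub_apply, PiLp.smul_apply, smul_eq_mul,
      Matrix.cons_val_zero, Matrix.cons_val_one, Matrix.head_cons,
      Real.cos_add, Real.sin_add, Real.cos_sub, Real.sin_sub,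
      Real.cos_pi, Real.sin_pi, Fin.mk_zero, Fin.mk_one]
    linear_combination (-2 * c * Real.sin α * Real.cos ((k : ℝ) * π / n) ^ 2) *
      Real.sin_sq_add_cos_sq α
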